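/- arXiv:1312.6714 — 3 statements merged into one kernel-verified Lean document; each statement's English description precedes it below -/
import Mathlib

section
/- For every σ ≥ 1 there exists a constant C > 0 depending only on p and σ such that for every σ-quasi-uniform partition of [a,b], every piecewise polynomial u^R = (P₀,…,P_N) of degree ≤ p with respect to it, every function u that is (p+1)-times continuously differentiable on [a,b], every index 0 ≤ i ≤ N, every point x_m ∈ [x_i, x_{i+1}], and every 0 ≤ k ≤ p, one has |P_i^{(k)}(x_m) − u^{(k)}(x_m)| ≤ C h^{−k} ( h^{p+1} |u|_{W^{p+1}_∞} + ‖u − u^R‖_{L^∞(a,b)} ). -/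
open MeasureTheory

noncomputable section

section AuxPW
open Set Polynomial


lemma iterDW_mono {f : ℝ → ℝ} {s t : Set ℝ} (hst : s ⊆ t) (hs : UniqueDiffOn ℝ s)
    (ht : UniqueDiffOn ℝ t) {n : ℕ} (hf : ContDiffOn ℝ n f t) {m : ℕ} (hmn : m ≤ n) :
    ∀ x ∈ s, iteratedDerivWithin m f s x = iteratedDerivWithin m f t x := by
  induction m with
  | zero => simp
  | succ m ih =>
    intro x hx
    have hm : m ≤ n := by omega
    have hdiff : DifferentiableWithinAt ℝ (iteratedDerivWithin m f t) t x :=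
      (hf.differentiableOn_iteratedDerivWithin (by exact_mod_cast hmn) ht) x (hst hx)
    rw [iteratedDerivWithin_succ (s := s), iteratedDerivWithin_succ (s := t),
      derivWithin_congr (fun y hy => ih hm y hy) (ih hm x hx),
      derivWithin_subset hst (hs x hx) hdiff]

lemma iterDW_iterDW {f : ℝ → ℝ} {s : Set ℝ} (hs : UniqueDiffOn ℝ s) (k : ℕ) :
    ∀ (m : ℕ), ∀ x ∈ s,
      iteratedDerivWithin m (iteratedDerivWithin k f s) s x = iteratedDerivWithin (m + k) f s x := by
  intro m
  induction m with
  | zero => intro x hx; simp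
  | succ m ih =>
    intro x hx
    rw [iteratedDerivWithin_succ (f := iteratedDerivWithin k f s), show m + 1 + k = (m + k) + 1 by omega,
      iteratedDerivWithin_succ (f := f)]
    exact derivWithin_congr (fun y hy => ih y hy) (ih x hx)

lemma contDiffOn_iterDW {f : ℝ → ℝ} {s : Set ℝ} (hs : UniqueDiffOn ℝ s) {n k : ℕ}
    (hf : ContDiffOn ℝ n f s) (hk : k ≤ n) :
    ContDiffOn ℝ ((n - k : ℕ)) (iteratedDerivWithin k f s) s := by
  rw [contDiffOn_nat_iff_continuousOn_differentiableOn_deriv hs]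
  constructor
  · intro m hm
    exact (hf.continuousOn_iteratedDerivWithin (by exact_mod_cast (show m + k ≤ n by omega)) hs).congr
      (fun x hx => iterDW_iterDW hs k m x hx)
  · intro m hm
    exact (hf.differentiableOn_iteratedDerivWithin (by exact_mod_cast (show m + k < n by omega)) hs).congr
      (fun x hx => iterDW_iterDW hs k m x hx)

lemma taylor_bd {g : ℝ → ℝ} {a b : ℝ} (hab : a < b) {q : ℕ}
    (hg : ContDiffOn ℝ (q + 1 : ℕ) g (Icc a b)) {M : ℝ}
    (hM : ∀ y ∈ Icc a b, |iteratedDerivWithin (q + 1) g (Icc a b) y| ≤ M)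
    {c : ℝ} (hc : c ∈ Icc a b) {t : ℝ} (ht : t ∈ Icc c b) :
    |g t - ∑ j ∈ Finset.range (q + 1),
        ((j.factorial : ℝ)⁻¹ * (t - c) ^ j) * iteratedDerivWithin j g (Icc a b) c|
      ≤ M * (t - c) ^ (q + 1) / q.factorial := by
  rcases eq_or_lt_of_le hc.2 with hcb | hcb
  · -- c = b, so t = c
    have htc : t = c := le_antisymm (hcb ▸ ht.2) ht.1
    have hM0 : 0 ≤ M := le_trans (abs_nonneg _) (hM c hc)
    subst htc
    rw [Finset.sum_eq_single 0 (by intro j hj hj0; simp [sub_self, zero_pow hj0])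
      (by simp)]
    simp [sub_self, hM0]
  · have hsub : Icc c b ⊆ Icc a b := Icc_subset_Icc hc.1 le_rfl
    have hus : UniqueDiffOn ℝ (Icc c b) := uniqueDiffOn_Icc hcb
    have hut : UniqueDiffOn ℝ (Icc a b) := uniqueDiffOn_Icc hab
    have key := taylor_mean_remainder_bound (le_of_lt hcb) (hg.mono hsub) ht
      (fun y hy => by
        rw [Real.norm_eq_abs, iterDW_mono hsub hus hut hg le_rfl y hy]
        exact hM y (hsub hy))
    rw [Real.norm_eq_abs, taylor_within_apply] at key
    have hsum : (∑ j ∈ Finset.range (q + 1),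
        ((j.factorial : ℝ)⁻¹ * (t - c) ^ j) • iteratedDerivWithin j g (Icc c b) c)
        = ∑ j ∈ Finset.range (q + 1),
        ((j.factorial : ℝ)⁻¹ * (t - c) ^ j) * iteratedDerivWithin j g (Icc a b) c := by
      refine Finset.sum_congr rfl fun j hj => ?_
      rw [smul_eq_mul, iterDW_mono hsub hus hut hg
        (by exact_mod_cast Nat.le_of_lt_succ (by exact_mod_cast Finset.mem_range.mp hj) |>.trans (Nat.le_succ q)) c
        (left_mem_Icc.mpr (le_of_lt hcb))]
    rwa [hsum] at key

lemma eval_le_sum_abs {Q : Polynomial ℝ} {p : ℕ} (hQ : Q.natDegree ≤ p) {t : ℝ}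
    (ht : t ∈ Icc (0:ℝ) 1) : |Q.eval t| ≤ ∑ j ∈ Finset.range (p + 1), |Q.coeff j| := by
  rw [Polynomial.eval_eq_sum_range' (Nat.lt_succ_of_le hQ)]
  refine le_trans (Finset.abs_sum_le_sum_abs _ _) (Finset.sum_le_sum fun j _ => ?_)
  rw [abs_mul]
  calc |Q.coeff j| * |t ^ j| ≤ |Q.coeff j| * 1 := by
        refine mul_le_mul_of_nonneg_left ?_ (abs_nonneg _)
        rw [abs_pow]
        exact pow_le_one₀ (abs_nonneg t) (abs_le.mpr ⟨by linarith [ht.1], ht.2⟩)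
    _ = |Q.coeff j| := mul_one _

lemma coeff_bd (p : ℕ) : ∃ C : ℝ, 0 < C ∧ ∀ Q : Polynomial ℝ, Q.natDegree ≤ p →
    ∀ S : ℝ, (∀ t ∈ Icc (0:ℝ) 1, |Q.eval t| ≤ S) → ∀ j, |Q.coeff j| ≤ C * S := by
  classical
  set s : Finset ℕ := Finset.range (p + 1) with hs
  set v : ℕ → ℝ := fun m => (m : ℝ) / (p + 1) with hv
  have hvinj : Set.InjOn v s := by
    intro i _ j _ hij
    have hp1 : ((p : ℝ) + 1) ≠ 0 := by positivity
    simp only [hv] at hij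
    field_simp at hij
    exact_mod_cast hij
  set C : ℝ := (∑ i ∈ s, ∑ j ∈ Finset.range (p + 1), |(Lagrange.basis s v i).coeff j|) + 1 with hC
  have hCpos : 0 < C := by
    have : 0 ≤ ∑ i ∈ s, ∑ j ∈ Finset.range (p + 1), |(Lagrange.basis s v i).coeff j| :=
      Finset.sum_nonneg fun i _ => Finset.sum_nonneg fun j _ => abs_nonneg _
    linarith
  refine ⟨C, hCpos, fun Q hQ S hQS j => ?_⟩
  have hS0 : 0 ≤ S := le_trans (abs_nonneg _) (hQS 0 (by constructor <;> norm_num))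
  by_cases hj : j ≤ p
  · have hdeg : Q.degree < (s.card : ℕ) := by
      rw [hs, Finset.card_range]
      exact lt_of_le_of_lt Q.degree_le_natDegree (by exact_mod_cast Nat.lt_succ_of_le hQ)
    have heq := Lagrange.eq_interpolate hvinj hdeg
    have hco : Q.coeff j = ∑ i ∈ s, Q.eval (v i) * (Lagrange.basis s v i).coeff j := by
      conv_lhs => rw [heq]
      rw [Lagrange.interpolate_apply, Polynomial.finset_sum_coeff]
      exact Finset.sum_congr rfl fun i _ => by rw [Polynomial.coeff_C_mul]
    rw [hco]
    refine le_trans (Finset.abs_sum_le_sum_abs _ _) ?_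
    have hbd : ∀ i ∈ s, |Q.eval (v i) * (Lagrange.basis s v i).coeff j|
        ≤ S * |(Lagrange.basis s v i).coeff j| := by
      intro i hi
      rw [abs_mul]
      refine mul_le_mul_of_nonneg_right (hQS (v i) ?_) (abs_nonneg _)
      have hi' : (i : ℝ) ≤ p := by exact_mod_cast Nat.le_of_lt_succ (Finset.mem_range.mp hi)
      constructor
      · positivity
      · rw [div_le_one (by positivity)]; linarith
    refine le_trans (Finset.sum_le_sum hbd) ?_
    rw [← Finset.mul_sum, mul_comm]
    refine mul_le_mul_of_nonneg_right ?_ hS0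
    rw [hC]
    have h1 : ∀ i ∈ s, |(Lagrange.basis s v i).coeff j|
        ≤ ∑ j' ∈ Finset.range (p + 1), |(Lagrange.basis s v i).coeff j'| :=
      fun i _ => Finset.single_le_sum (f := fun j' => |(Lagrange.basis s v i).coeff j'|)
        (fun j' _ => abs_nonneg _) (Finset.mem_range.mpr (Nat.lt_succ_of_le hj))
    linarith [Finset.sum_le_sum h1]
  · rw [Q.coeff_eq_zero_of_natDegree_lt (lt_of_le_of_lt hQ (by omega)), abs_zero]
    positivity

lemma markov01 (p : ℕ) : ∃ C : ℝ, 0 < C ∧ ∀ Q : Polynomial ℝ, Q.natDegree ≤ p →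
    ∀ S : ℝ, (∀ t ∈ Icc (0:ℝ) 1, |Q.eval t| ≤ S) → ∀ k, ∀ t ∈ Icc (0:ℝ) 1,
    |(Polynomial.derivative^[k] Q).eval t| ≤ C * S := by
  obtain ⟨C0, hC0, hbd⟩ := coeff_bd p
  refine ⟨(p + 1) * ((2 * p + 1) ^ (2 * p) : ℕ) * C0, by positivity, fun Q hQ S hQS k t ht => ?_⟩
  have hS0 : 0 ≤ S := le_trans (abs_nonneg _) (hQS 0 (by constructor <;> norm_num))
  have hdeg : (Polynomial.derivative^[k] Q).natDegree ≤ p :=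
    le_trans (Q.natDegree_iterate_derivative k) (by omega)
  refine le_trans (eval_le_sum_abs hdeg ht) ?_
  have hco : ∀ j ∈ Finset.range (p + 1),
      |(Polynomial.derivative^[k] Q).coeff j| ≤ (((2 * p + 1) ^ (2 * p) : ℕ) : ℝ) * (C0 * S) := by
    intro j hj
    rw [Polynomial.coeff_iterate_derivative, nsmul_eq_mul, abs_mul, abs_of_nonneg
      (by positivity : (0:ℝ) ≤ ((j + k).descFactorial k : ℝ))]
    by_cases hjk : j + k ≤ 2 * p
    · have h1 : ((j + k).descFactorial k : ℝ) ≤ (((2 * p + 1) ^ (2 * p) : ℕ) : ℝ) := by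
        have h2 : (j + k).descFactorial k ≤ (2 * p + 1) ^ (2 * p) :=
          le_trans (Nat.descFactorial_le_pow _ _)
            (le_trans (Nat.pow_le_pow_left (by omega) k) (Nat.pow_le_pow_right (by omega) (by omega)))
        exact_mod_cast h2
      exact mul_le_mul h1 (hbd Q hQ S hQS _) (abs_nonneg _) (by positivity)
    · -- j ≤ p so k > p, but then derivative^[k] Q = 0? Not necessarily k > natDegree... j + k > 2p, j ≤ p so k > p ≥ natDegree Q, coeff (j+k) = 0
      have : Q.coeff (j + k) = 0 := Q.coeff_eq_zero_of_natDegree_lt (by omega)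
      rw [this, abs_zero, mul_zero]
      positivity
  refine le_trans (Finset.sum_le_sum hco) ?_
  rw [Finset.sum_const, Finset.card_range, nsmul_eq_mul]
  refine le_of_eq ?_
  push_cast
  ring

lemma iterate_derivative_comp_linear (Q : Polynomial ℝ) (δ c : ℝ) (k : ℕ) :
    Polynomial.derivative^[k] (Q.comp (C δ * X + C c))
      = C (δ ^ k) * (Polynomial.derivative^[k] Q).comp (C δ * X + C c) := by
  induction k with
  | zero => simp
  | succ k ih =>
    rw [Function.iterate_succ_apply', ih, Polynomial.derivative_C_mul,
      Polynomial.derivative_comp, Function.iterate_succ_apply']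
    have : Polynomial.derivative (C δ * X + C c) = C δ := by
      simp
    rw [this, pow_succ, Polynomial.C_mul]
    ring

lemma markov_scaled (p : ℕ) : ∃ C : ℝ, 0 < C ∧ ∀ Q : Polynomial ℝ, Q.natDegree ≤ p →
    ∀ c δ : ℝ, 0 < δ → ∀ S : ℝ, (∀ t ∈ Icc c (c + δ), |Q.eval t| ≤ S) →
    ∀ k, ∀ t ∈ Icc c (c + δ),
    |(Polynomial.derivative^[k] Q).eval t| ≤ C * S / δ ^ k := by
  obtain ⟨C1, hC1, hbd⟩ := markov01 p
  refine ⟨C1, hC1, fun Q hQ c δ hδ S hQS k t ht => ?_⟩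
  set R : Polynomial ℝ := Q.comp (C δ * X + C c) with hR
  have hRdeg : R.natDegree ≤ p := by
    rw [hR, Polynomial.natDegree_comp]
    have : (C δ * X + C c).natDegree = 1 := Polynomial.natDegree_linear (ne_of_gt hδ)
    rw [this, mul_one]
    exact hQ
  have hReval : ∀ s : ℝ, R.eval s = Q.eval (δ * s + c) := by
    intro s; rw [hR, Polynomial.eval_comp]; simp
  have hRS : ∀ s ∈ Icc (0:ℝ) 1, |R.eval s| ≤ S := by
    intro s hs
    rw [hReval]
    refine hQS _ ⟨by nlinarith [hs.1], by nlinarith [hs.2]⟩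
  set u : ℝ := (t - c) / δ with hu
  have hu01 : u ∈ Icc (0:ℝ) 1 := by
    constructor
    · apply div_nonneg (by linarith [ht.1]) hδ.le
    · rw [div_le_one hδ]; linarith [ht.2]
  have hut : δ * u + c = t := by rw [hu, show δ * ((t - c) / δ) = t - c by field_simp]; ring
  have hkey := hbd R hRdeg S hRS k u hu01
  have hRk : (Polynomial.derivative^[k] R).eval u
      = δ ^ k * (Polynomial.derivative^[k] Q).eval t := by
    rw [hR, iterate_derivative_comp_linear, Polynomial.eval_mul, Polynomial.eval_C,
      Polynomial.eval_comp]
    simp [hut]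
  rw [hRk, abs_mul, abs_of_nonneg (by positivity : (0:ℝ) ≤ δ ^ k)] at hkey
  rw [le_div_iff₀ (by positivity : (0:ℝ) < δ ^ k)]
  calc |(Polynomial.derivative^[k] Q).eval t| * δ ^ k
      = δ ^ k * |(Polynomial.derivative^[k] Q).eval t| := by ring
    _ ≤ C1 * S := hkey

noncomputable def Tpoly (q : ℕ) (d : ℕ → ℝ) (c : ℝ) : Polynomial ℝ :=
  ∑ j ∈ Finset.range (q + 1), C (d j / j.factorial) * (X - C c) ^ j

lemma eval_Tpoly (q : ℕ) (d : ℕ → ℝ) (c t : ℝ) :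
    (Tpoly q d c).eval t
      = ∑ j ∈ Finset.range (q + 1), ((j.factorial : ℝ)⁻¹ * (t - c) ^ j) * d j := by
  rw [Tpoly, Polynomial.eval_finset_sum]
  refine Finset.sum_congr rfl fun j _ => ?_
  simp [div_eq_mul_inv]
  ring

lemma natDegree_Tpoly (q : ℕ) (d : ℕ → ℝ) (c : ℝ) : (Tpoly q d c).natDegree ≤ q := by
  refine Polynomial.natDegree_sum_le_of_forall_le _ _ fun j hj => ?_
  refine le_trans (Polynomial.natDegree_C_mul_le _ _) ?_
  refine le_trans (Polynomial.natDegree_pow_le) ?_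
  have : (X - C c).natDegree = 1 := Polynomial.natDegree_X_sub_C c
  rw [this, mul_one]
  exact Nat.le_of_lt_succ (Finset.mem_range.mp hj)

lemma derivative_Tpoly (q : ℕ) (d : ℕ → ℝ) (c : ℝ) :
    Polynomial.derivative (Tpoly (q + 1) d c) = Tpoly q (fun m => d (m + 1)) c := by
  rw [Tpoly, Polynomial.derivative_sum]
  have hterm : ∀ j, Polynomial.derivative (C (d j / j.factorial) * (X - C c) ^ j)
      = C (d j / j.factorial) * (C (j : ℝ) * (X - C c) ^ (j - 1)) := by
    intro j
    rw [Polynomial.derivative_C_mul, Polynomial.derivative_pow, Polynomial.derivative_X_sub_C,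
      mul_one]
  simp only [hterm]
  rw [Finset.sum_range_succ']
  simp only [Nat.cast_zero, Polynomial.C_0, zero_mul, mul_zero, add_zero]
  rw [Tpoly]
  refine Finset.sum_congr rfl fun m _ => ?_
  have : (C (d (m + 1) / (m + 1).factorial) : Polynomial ℝ) * C ((m : ℝ) + 1)
      = C (d (m + 1) / m.factorial) := by
    rw [← Polynomial.C_mul]
    congr 1
    rw [Nat.factorial_succ]
    have h1 : ((m.factorial : ℝ)) ≠ 0 := by exact_mod_cast m.factorial_ne_zero
    have h2 : ((m : ℝ) + 1) ≠ 0 := by positivity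
    field_simp
    push_cast
    ring
  rw [Nat.add_sub_cancel, ← mul_assoc]
  push_cast
  rw [this]

lemma iterate_derivative_Tpoly : ∀ (k q : ℕ), k ≤ q → ∀ (d : ℕ → ℝ) (c : ℝ),
    Polynomial.derivative^[k] (Tpoly q d c) = Tpoly (q - k) (fun m => d (m + k)) c := by
  intro k
  induction k with
  | zero => intro q _ d c; simp
  | succ k ih =>
    intro q hq d c
    obtain ⟨q', rfl⟩ : ∃ q', q = q' + 1 := ⟨q - 1, by omega⟩
    rw [Function.iterate_succ_apply, derivative_Tpoly, ih q' (by omega) _ c]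
    have : q' + 1 - (k + 1) = q' - k := by omega
    rw [this]
    simp only [add_assoc]

end AuxPW

open Set Polynomial

/-- Maximal mesh size `h` of the partition `x 0 < x 1 < ... < x (N+1)`. -/
def meshH (N : ℕ) (x : ℕ → ℝ) : ℝ :=
  (Finset.range (N + 1)).sup' (Finset.nonempty_range_iff.mpr (Nat.succ_ne_zero N))
    (fun i => x (i + 1) - x i)

/-- Minimal mesh size `h_min`. -/
def meshHmin (N : ℕ) (x : ℕ → ℝ) : ℝ :=
  (Finset.range (N + 1)).inf' (Finset.nonempty_range_iff.mpr (Nat.succ_ne_zero N))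
    (fun i => x (i + 1) - x i)

/-- Jump of the `k`-th derivative of the piecewise polynomial `P` at the node `x i`. -/
def jumpD (P : ℕ → Polynomial ℝ) (x : ℕ → ℝ) (i k : ℕ) : ℝ :=
  (Polynomial.derivative^[k] (P i)).eval (x i)
    - (Polynomial.derivative^[k] (P (i - 1))).eval (x i)

/-- `L^∞` distance between `u` and the piecewise polynomial `u^R` defined by `P`. -/
def distLinf (N : ℕ) (x : ℕ → ℝ) (P : ℕ → Polynomial ℝ) (u : ℝ → ℝ) : ℝ :=
  (Finset.range (N + 1)).sup' (Finset.nonempty_range_iff.mpr (Nat.succ_ne_zero N))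
    (fun i => sSup ((fun t => |u t - (P i).eval t|) '' Set.Icc (x i) (x (i + 1))))

/-- Sobolev seminorm `|u|_{W^{p+1}_∞}` on `[a,b]`. -/
def semiWinf (p : ℕ) (a b : ℝ) (u : ℝ → ℝ) : ℝ :=
  sSup ((fun t => |iteratedDerivWithin (p + 1) u (Set.Icc a b) t|) '' Set.Icc a b)

/-- Interior estimate (Theorem 3.2, `s = ∞` case): the difference of the `k`-th
derivatives of `u^R` and `u` at any point of any element is controlled by
`h^{-k} (h^{p+1} |u|_{W^{p+1}_∞} + ‖u - u^R‖_∞)`. -/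
theorem interior_derivative_difference_bound_linf (p : ℕ) (σ : ℝ) (hσ : 1 ≤ σ) :
    ∃ C : ℝ, 0 < C ∧
      ∀ (N : ℕ), 1 ≤ N → ∀ (a b : ℝ), a < b →
      ∀ (x : ℕ → ℝ), x 0 = a → x (N + 1) = b → (∀ i ≤ N, x i < x (i + 1)) →
      meshH N x ≤ σ * meshHmin N x →
      ∀ (P : ℕ → Polynomial ℝ), (∀ i ≤ N, (P i).natDegree ≤ p) →
      ∀ (u : ℝ → ℝ), ContDiffOn ℝ (p + 1 : ℕ) u (Set.Icc a b) →
      ∀ i ≤ N, ∀ xm ∈ Set.Icc (x i) (x (i + 1)), ∀ k ≤ p,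
      |(Polynomial.derivative^[k] (P i)).eval xm - iteratedDerivWithin k u (Set.Icc a b) xm| ≤
        C * (meshH N x ^ (p + 1) * semiWinf p a b u + distLinf N x P u) / meshH N x ^ k := by

  obtain ⟨C2, hC2, hmarkov⟩ := markov_scaled p
  have hσ0 : 0 < σ := lt_of_lt_of_le one_pos hσ
  refine ⟨C2 * σ ^ p + 1, by positivity, ?_⟩
  intro N hN a b hab x hx0 hxN hxlt hqu P hP u hu i hi xm hxm k hk
  have huniq : UniqueDiffOn ℝ (Icc a b) := uniqueDiffOn_Icc hab
  -- partition monotonicity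
  have hmono : ∀ l ≤ N + 1, ∀ j ≤ l, x j ≤ x l := by
    intro l
    induction l with
    | zero => intro _ j hj; rw [Nat.le_zero.mp hj]
    | succ l ih =>
      intro hl j hj
      rcases Nat.lt_or_ge j (l + 1) with h | h
      · exact le_trans (ih (by omega) j (by omega)) (hxlt l (by omega)).le
      · have : j = l + 1 := by omega
        rw [this]
  have haxi : a ≤ x i := by rw [← hx0]; exact hmono i (by omega) 0 (by omega)
  have hxib : x (i + 1) ≤ b := by rw [← hxN]; exact hmono (N + 1) le_rfl (i + 1) (by omega)
  have helem_sub : Icc (x i) (x (i + 1)) ⊆ Icc a b := Icc_subset_Icc haxi hxib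
  have hximem : x i ∈ Icc a b := ⟨haxi, le_trans (hxlt i hi).le hxib⟩
  have hδ : 0 < x (i + 1) - x i := by linarith [hxlt i hi]
  set h : ℝ := meshH N x with hh
  have himem : i ∈ Finset.range (N + 1) := Finset.mem_range.mpr (by omega)
  have hδh : x (i + 1) - x i ≤ h := Finset.le_sup' (fun j => x (j + 1) - x j) himem
  have hh0 : 0 < h := lt_of_lt_of_le hδ hδh
  have hhσδ : h ≤ σ * (x (i + 1) - x i) := by
    refine le_trans hqu (mul_le_mul_of_nonneg_left ?_ hσ0.le)
    exact Finset.inf'_le (fun j => x (j + 1) - x j) himem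
  -- seminorm facts
  set M : ℝ := semiWinf p a b u with hM
  have hcontM : ContinuousOn (fun t => |iteratedDerivWithin (p + 1) u (Icc a b) t|) (Icc a b) :=
    (hu.continuousOn_iteratedDerivWithin (by exact_mod_cast le_rfl) huniq).abs
  have hMbd : ∀ y ∈ Icc a b, |iteratedDerivWithin (p + 1) u (Icc a b) y| ≤ M := by
    intro y hy
    exact le_csSup (isCompact_Icc.bddAbove_image hcontM) (mem_image_of_mem _ hy)
  have hM0 : 0 ≤ M := le_trans (abs_nonneg _) (hMbd a (left_mem_Icc.mpr hab.le))
  -- L∞ distance facts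
  set D : ℝ := distLinf N x P u with hD
  have hDbd : ∀ t ∈ Icc (x i) (x (i + 1)), |u t - (P i).eval t| ≤ D := by
    intro t ht
    have hcont : ContinuousOn (fun t => |u t - (P i).eval t|) (Icc (x i) (x (i + 1))) :=
      ((hu.continuousOn.mono helem_sub).sub ((P i).continuous_aeval.continuousOn)).abs
    have h1 : |u t - (P i).eval t|
        ≤ sSup ((fun t => |u t - (P i).eval t|) '' Icc (x i) (x (i + 1))) :=
      le_csSup (isCompact_Icc.bddAbove_image hcont) (mem_image_of_mem _ ht)
    exact le_trans h1 (Finset.le_sup'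
      (fun j => sSup ((fun t => |u t - (P j).eval t|) '' Icc (x j) (x (j + 1)))) himem)
  have hD0 : 0 ≤ D :=
    le_trans (abs_nonneg _) (hDbd (x i) (left_mem_Icc.mpr (hxlt i hi).le))
  -- Taylor polynomial
  set d : ℕ → ℝ := fun j => iteratedDerivWithin j u (Icc a b) (x i) with hd
  set T : Polynomial ℝ := Tpoly p d (x i) with hT
  -- Claim 1
  have claim1 : ∀ t ∈ Icc (x i) (x (i + 1)), |u t - T.eval t| ≤ M * h ^ (p + 1) := by
    intro t ht
    have ht' : t ∈ Icc (x i) b := ⟨ht.1, le_trans ht.2 hxib⟩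
    have := taylor_bd hab hu hMbd hximem ht'
    rw [show (∑ j ∈ Finset.range (p + 1),
        ((j.factorial : ℝ)⁻¹ * (t - x i) ^ j) * iteratedDerivWithin j u (Icc a b) (x i))
        = T.eval t by rw [hT, eval_Tpoly]] at this
    refine le_trans this ?_
    have h1 : (t - x i) ^ (p + 1) ≤ h ^ (p + 1) :=
      pow_le_pow_left₀ (by linarith [ht.1]) (by linarith [ht.2, hδh]) _
    have h2 : (1 : ℝ) ≤ (p.factorial : ℝ) := by exact_mod_cast p.factorial_pos
    calc M * (t - x i) ^ (p + 1) / p.factorial ≤ M * h ^ (p + 1) / p.factorial := by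
          apply div_le_div_of_nonneg_right ?_ ?_ |>.trans le_rfl
          · exact mul_le_mul_of_nonneg_left h1 hM0
          · linarith
      _ ≤ M * h ^ (p + 1) := by
          apply div_le_self (by positivity) h2
  -- Claim 2
  have hpow_split : h ^ (p - k + 1) = h ^ (p + 1) / h ^ k := by
    rw [eq_div_iff (ne_of_gt (pow_pos hh0 k)), ← pow_add]
    congr 1
    omega
  have claim2 : |(Polynomial.derivative^[k] T).eval xm - iteratedDerivWithin k u (Icc a b) xm|
      ≤ M * h ^ (p + 1) / h ^ k := by
    set g : ℝ → ℝ := iteratedDerivWithin k u (Icc a b) with hg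
    have hgcd : ContDiffOn ℝ (p - k + 1 : ℕ) g (Icc a b) := by
      have := contDiffOn_iterDW huniq hu (show k ≤ p + 1 by omega)
      rwa [show p + 1 - k = p - k + 1 by omega] at this
    have hgM : ∀ y ∈ Icc a b, |iteratedDerivWithin (p - k + 1) g (Icc a b) y| ≤ M := by
      intro y hy
      rw [hg, iterDW_iterDW huniq k (p - k + 1) y hy, show p - k + 1 + k = p + 1 by omega]
      exact hMbd y hy
    have hxm' : xm ∈ Icc (x i) b := ⟨hxm.1, le_trans hxm.2 hxib⟩
    have happ := taylor_bd hab hgcd hgM hximem hxm'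
    have hsum : (∑ j ∈ Finset.range (p - k + 1),
        ((j.factorial : ℝ)⁻¹ * (xm - x i) ^ j) * iteratedDerivWithin j g (Icc a b) (x i))
        = (Polynomial.derivative^[k] T).eval xm := by
      rw [hT, iterate_derivative_Tpoly k p hk d (x i), eval_Tpoly]
      refine Finset.sum_congr rfl fun j _ => ?_
      rw [hg, iterDW_iterDW huniq k j (x i) hximem]
    rw [hsum, abs_sub_comm] at happ
    refine le_trans happ ?_
    rw [show M * h ^ (p + 1) / h ^ k = M * h ^ (p - k + 1) by rw [hpow_split]; ring]
    have h1 : (xm - x i) ^ (p - k + 1) ≤ h ^ (p - k + 1) :=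
      pow_le_pow_left₀ (by linarith [hxm.1]) (by linarith [hxm.2, hδh]) _
    have h2 : (1 : ℝ) ≤ ((p - k).factorial : ℝ) := by exact_mod_cast (p - k).factorial_pos
    calc M * (xm - x i) ^ (p - k + 1) / (p - k).factorial
        ≤ M * h ^ (p - k + 1) / (p - k).factorial := by
          apply div_le_div_of_nonneg_right (mul_le_mul_of_nonneg_left h1 hM0)
          linarith
      _ ≤ M * h ^ (p - k + 1) := div_le_self (by positivity) h2
  -- Claim 3 : Markov step
  set S : ℝ := D + M * h ^ (p + 1) with hS
  have hS0 : 0 ≤ S := by positivity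
  have hPTS : ∀ t ∈ Icc (x i) (x i + (x (i + 1) - x i)), |(P i - T).eval t| ≤ S := by
    intro t ht
    rw [show x i + (x (i + 1) - x i) = x (i + 1) by ring] at ht
    rw [Polynomial.eval_sub]
    calc |(P i).eval t - T.eval t|
        ≤ |(P i).eval t - u t| + |u t - T.eval t| := abs_sub_le _ _ _
      _ ≤ D + M * h ^ (p + 1) := by
          rw [abs_sub_comm]
          exact add_le_add (hDbd t ht) (claim1 t ht)
  have hdegPT : (P i - T).natDegree ≤ p :=
    le_trans (Polynomial.natDegree_sub_le _ _) (max_le (hP i hi) (natDegree_Tpoly p d (x i)))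
  have hxm'' : xm ∈ Icc (x i) (x i + (x (i + 1) - x i)) := by
    rw [show x i + (x (i + 1) - x i) = x (i + 1) by ring]
    exact hxm
  have hmark := hmarkov (P i - T) hdegPT (x i) (x (i + 1) - x i) hδ S hPTS k xm hxm''
  rw [Polynomial.iterate_derivative_sub, Polynomial.eval_sub] at hmark
  have claim3 : |(Polynomial.derivative^[k] (P i)).eval xm
      - (Polynomial.derivative^[k] T).eval xm| ≤ C2 * σ ^ p * S / h ^ k := by
    refine le_trans hmark ?_
    have hδk : (0:ℝ) < (x (i + 1) - x i) ^ k := pow_pos hδ k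
    have hhk : (0:ℝ) < h ^ k := pow_pos hh0 k
    have h1 : h ^ k ≤ σ ^ k * (x (i + 1) - x i) ^ k := by
      rw [← mul_pow]; exact pow_le_pow_left₀ hh0.le hhσδ k
    have h2 : σ ^ k ≤ σ ^ p := pow_le_pow_right₀ hσ hk
    have key : 1 / (x (i + 1) - x i) ^ k ≤ σ ^ p / h ^ k := by
      rw [div_le_div_iff₀ hδk hhk, one_mul]
      calc h ^ k ≤ σ ^ k * (x (i + 1) - x i) ^ k := h1
        _ ≤ σ ^ p * (x (i + 1) - x i) ^ k := mul_le_mul_of_nonneg_right h2 hδk.le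
    calc C2 * S / (x (i + 1) - x i) ^ k = C2 * S * (1 / (x (i + 1) - x i) ^ k) := by ring
      _ ≤ C2 * S * (σ ^ p / h ^ k) :=
          mul_le_mul_of_nonneg_left key (by positivity)
      _ = C2 * σ ^ p * S / h ^ k := by ring
  -- final assembly
  calc |(Polynomial.derivative^[k] (P i)).eval xm - iteratedDerivWithin k u (Icc a b) xm|
      ≤ |(Polynomial.derivative^[k] (P i)).eval xm - (Polynomial.derivative^[k] T).eval xm|
        + |(Polynomial.derivative^[k] T).eval xm - iteratedDerivWithin k u (Icc a b) xm| :=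
        abs_sub_le _ _ _
    _ ≤ C2 * σ ^ p * S / h ^ k + M * h ^ (p + 1) / h ^ k := add_le_add claim3 claim2
    _ ≤ (C2 * σ ^ p + 1) * (h ^ (p + 1) * M + D) / h ^ k := by
        rw [← add_div, div_le_div_iff₀ (pow_pos hh0 k) (pow_pos hh0 k)]
        have hexp : C2 * σ ^ p * S + M * h ^ (p + 1)
            = (C2 * σ ^ p + 1) * (h ^ (p + 1) * M + D) - D := by rw [hS]; ring
        nlinarith [pow_pos hh0 k, mul_nonneg hD0 (pow_pos hh0 k).le]

end
end

section
/- For every σ ≥ 1 there exists a constant C > 0 depending only on p and σ such that the following holds: for every σ-quasi-uniform partition of [a,b], every piecewise polynomial u^R = (P₀,…,P_N) of degree ≤ p with respect to it, every function u that is (p+1)-times continuously differentiable on [a,b], and every constant K ≥ 0, if ‖u − u^R‖_{L^∞(a,b)} ≤ K h^{p+1}, then for every 0 ≤ i ≤ N, every x_m ∈ [x_i, x_{i+1}], and every 0 ≤ k ≤ p, |P_i^{(k)}(x_m)| ≤ sup_{x ∈ [a,b]} |u^{(k)}(x)| + C (K + |u|_{W^{p+1}_∞}) h^{p+1−k}.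 (In particular, optimal-order L^∞ convergence forces all derivatives of u^R up to order p to remain bounded as h → 0.) -/
open MeasureTheory
open Polynomial Set
open scoped Nat

noncomputable section

/-- Coefficients of a polynomial of degree at most `p` are controlled by its values on `[0,1]`. -/
lemma aux_coeff_bound (p : ℕ) : ∃ M : ℝ, 0 < M ∧ ∀ Q : ℝ[X], Q.natDegree ≤ p →
    ∀ B : ℝ, (∀ t ∈ Set.Icc (0:ℝ) 1, |Q.eval t| ≤ B) → ∀ m, |Q.coeff m| ≤ M * B := by
  classical
  set v : ℕ → ℝ := fun j => j / (p + 1) with hv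
  have hp1 : (0:ℝ) < p + 1 := by positivity
  have hinj : Set.InjOn v (Finset.range (p+1)) := by
    intro a _ b _ hab
    simp only [hv] at hab
    field_simp at hab
    exact_mod_cast hab
  set M : ℝ := 1 + ∑ j ∈ Finset.range (p+1), ∑ m ∈ Finset.range (p+1),
      |(Lagrange.basis (Finset.range (p+1)) v j).coeff m| with hM
  have hsum_nonneg : 0 ≤ ∑ j ∈ Finset.range (p+1), ∑ m ∈ Finset.range (p+1),
      |(Lagrange.basis (Finset.range (p+1)) v j).coeff m| := by
    apply Finset.sum_nonneg; intro j _; apply Finset.sum_nonneg; intro m _; exact abs_nonneg _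
  have hM0 : 0 < M := by rw [hM]; linarith
  refine ⟨M, hM0, ?_⟩
  intro Q hQ B hB m
  have hB0 : 0 ≤ B := le_trans (abs_nonneg _) (hB 0 (by norm_num))
  by_cases hm : m ≤ p
  · have hdeg : Q.degree < (Finset.range (p+1)).card := by
      rw [Finset.card_range]
      exact lt_of_le_of_lt Polynomial.degree_le_natDegree (by exact_mod_cast Nat.lt_succ_of_le hQ)
    have hrep := Lagrange.eq_interpolate hinj hdeg
    have hcoeff : Q.coeff m = ∑ j ∈ Finset.range (p+1),
        Q.eval (v j) * (Lagrange.basis (Finset.range (p+1)) v j).coeff m := by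
      conv_lhs => rw [hrep]
      rw [Lagrange.interpolate_apply, Polynomial.finset_sum_coeff]
      exact Finset.sum_congr rfl fun j _ => Polynomial.coeff_C_mul _
    rw [hcoeff]
    calc |∑ j ∈ Finset.range (p+1),
        Q.eval (v j) * (Lagrange.basis (Finset.range (p+1)) v j).coeff m|
        ≤ ∑ j ∈ Finset.range (p+1),
          |Q.eval (v j) * (Lagrange.basis (Finset.range (p+1)) v j).coeff m| :=
        Finset.abs_sum_le_sum_abs _ _
      _ ≤ ∑ j ∈ Finset.range (p+1),
          B * |(Lagrange.basis (Finset.range (p+1)) v j).coeff m| := by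
        apply Finset.sum_le_sum; intro j hj
        rw [abs_mul]
        apply mul_le_mul_of_nonneg_right _ (abs_nonneg _)
        apply hB
        have hjp : j ≤ p := Nat.lt_succ_iff.mp (Finset.mem_range.mp hj)
        constructor
        · positivity
        · rw [div_le_one hp1]
          have : (j:ℝ) ≤ p := by exact_mod_cast hjp
          linarith
      _ = B * ∑ j ∈ Finset.range (p+1),
          |(Lagrange.basis (Finset.range (p+1)) v j).coeff m| := by
        rw [Finset.mul_sum]
      _ ≤ B * M := by
        apply mul_le_mul_of_nonneg_left _ hB0
        rw [hM]
        have : ∑ j ∈ Finset.range (p+1), |(Lagrange.basis (Finset.range (p+1)) v j).coeff m|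
            ≤ ∑ j ∈ Finset.range (p+1), ∑ m' ∈ Finset.range (p+1),
              |(Lagrange.basis (Finset.range (p+1)) v j).coeff m'| := by
          apply Finset.sum_le_sum; intro j _
          exact Finset.single_le_sum
            (f := fun m' => |(Lagrange.basis (Finset.range (p+1)) v j).coeff m'|)
            (fun m' _ => abs_nonneg _) (Finset.mem_range.mpr (Nat.lt_succ_of_le hm))
        linarith
      _ = M * B := mul_comm _ _
  · rw [Polynomial.coeff_eq_zero_of_natDegree_lt (lt_of_le_of_lt hQ (by omega))]
    simpa using mul_nonneg hM0.le hB0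




lemma aux_iter_deriv_coeff (p : ℕ) : ∀ (k : ℕ) (Q : ℝ[X]), Q.natDegree ≤ p → ∀ m : ℕ,
    |(derivative^[k] Q).coeff m| ≤ (p+1:ℝ)^k * |Q.coeff (m+k)| := by
  intro k
  induction k with
  | zero => intro Q hQ m; simp
  | succ k ih =>
    intro Q hQ m
    rw [Function.iterate_succ_apply]
    have hd : (derivative Q).natDegree ≤ p :=
      le_trans (Polynomial.natDegree_derivative_le Q) (le_trans (Nat.sub_le _ _) hQ)
    have h1 := ih (derivative Q) hd m
    rw [Polynomial.coeff_derivative] at h1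
    by_cases hc : Q.coeff (m + k + 1) = 0
    · have : m + (k+1) = m + k + 1 := by omega
      rw [this, hc]
      simp only [hc, zero_mul, abs_zero, mul_zero] at h1 ⊢
      exact h1
    · have hle : m + k + 1 ≤ p := by
        by_contra hgt
        exact hc (Polynomial.coeff_eq_zero_of_natDegree_lt (lt_of_le_of_lt hQ (by omega)))
      have : m + (k+1) = m + k + 1 := by omega
      rw [this]
      calc |(derivative^[k] (derivative Q)).coeff m|
          ≤ (p+1:ℝ)^k * |Q.coeff (m + k + 1) * (↑(m + k) + 1)| := h1
        _ = (p+1:ℝ)^k * (↑(m + k) + 1) * |Q.coeff (m + k + 1)| := by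
            rw [abs_mul]
            rw [abs_of_nonneg (by positivity : (0:ℝ) ≤ (↑(m + k) + 1))]
            ring
        _ ≤ (p+1:ℝ)^k * (p+1:ℝ) * |Q.coeff (m + k + 1)| := by
            apply mul_le_mul_of_nonneg_right _ (abs_nonneg _)
            apply mul_le_mul_of_nonneg_left _ (by positivity)
            have h0 : (m + k : ℕ) ≤ p := by omega
            have h1 := (Nat.cast_le (α := ℝ)).mpr h0
            linarith
        _ = (p+1:ℝ)^(k+1) * |Q.coeff (m + k + 1)| := by ring

lemma aux_unit_bound (p : ℕ) : ∃ M : ℝ, 0 < M ∧ ∀ Q : ℝ[X], Q.natDegree ≤ p → ∀ k ≤ p,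
    ∀ B : ℝ, (∀ t ∈ Set.Icc (0:ℝ) 1, |Q.eval t| ≤ B) → ∀ t ∈ Set.Icc (0:ℝ) 1,
    |(derivative^[k] Q).eval t| ≤ M * B := by
  obtain ⟨M₀, hM₀, hcoeff⟩ := aux_coeff_bound p
  refine ⟨(p+1) * (p+1)^p * M₀, by positivity, ?_⟩
  intro Q hQ k hk B hB t ht
  have hB0 : 0 ≤ B := le_trans (abs_nonneg _) (hB 0 (by norm_num))
  have hdeg : (derivative^[k] Q).natDegree < p + 1 :=
    Nat.lt_succ_of_le (le_trans (Polynomial.natDegree_iterate_derivative Q k)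
      (le_trans (Nat.sub_le _ _) hQ))
  rw [Polynomial.eval_eq_sum_range' hdeg]
  have htabs : |t| ≤ 1 := abs_le.mpr ⟨by linarith [ht.1], ht.2⟩
  calc |∑ i ∈ Finset.range (p+1), (derivative^[k] Q).coeff i * t ^ i|
      ≤ ∑ i ∈ Finset.range (p+1), |(derivative^[k] Q).coeff i * t ^ i| :=
        Finset.abs_sum_le_sum_abs _ _
    _ ≤ ∑ i ∈ Finset.range (p+1), (p+1:ℝ)^p * (M₀ * B) := by
        apply Finset.sum_le_sum; intro i _
        rw [abs_mul]
        have h1 : |(derivative^[k] Q).coeff i| ≤ (p+1:ℝ)^k * (M₀ * B) := by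
          calc |(derivative^[k] Q).coeff i| ≤ (p+1:ℝ)^k * |Q.coeff (i+k)| :=
                aux_iter_deriv_coeff p k Q hQ i
            _ ≤ (p+1:ℝ)^k * (M₀ * B) := by
                apply mul_le_mul_of_nonneg_left (hcoeff Q hQ B hB (i+k)) (by positivity)
        have h2 : |t ^ i| ≤ 1 := by
          rw [abs_pow]; exact pow_le_one₀ (abs_nonneg t) htabs
        calc |(derivative^[k] Q).coeff i| * |t ^ i|
            ≤ ((p+1:ℝ)^k * (M₀ * B)) * 1 := by
              apply mul_le_mul h1 h2 (abs_nonneg _) (by positivity)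
          _ = (p+1:ℝ)^k * (M₀ * B) := mul_one _
          _ ≤ (p+1:ℝ)^p * (M₀ * B) := by
              apply mul_le_mul_of_nonneg_right _ (by positivity)
              exact pow_le_pow_right₀ (by linarith) hk
    _ = (p+1:ℝ) * (p+1:ℝ)^p * (M₀ * B) := by
        rw [Finset.sum_const, Finset.card_range]
        push_cast; ring
    _ = (p+1) * (p+1)^p * M₀ * B := by ring

lemma aux_iter_deriv_comp (Q : ℝ[X]) (c d : ℝ) (k : ℕ) :
    derivative^[k] (Q.comp (Polynomial.C d * Polynomial.X + Polynomial.C c))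
      = Polynomial.C (d^k) *
        (derivative^[k] Q).comp (Polynomial.C d * Polynomial.X + Polynomial.C c) := by
  induction k with
  | zero => simp
  | succ k ih =>
    rw [Function.iterate_succ_apply', ih, Polynomial.derivative_C_mul,
      Polynomial.derivative_comp]
    have hL : derivative (Polynomial.C d * Polynomial.X + Polynomial.C c)
        = Polynomial.C d := by
      simp
    rw [hL, Function.iterate_succ_apply', pow_succ, Polynomial.C_mul]
    ring

lemma aux_markov (p : ℕ) : ∃ M : ℝ, 0 < M ∧ ∀ Q : ℝ[X], Q.natDegree ≤ p → ∀ k ≤ p,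
    ∀ c d : ℝ, c < d → ∀ B : ℝ, (∀ y ∈ Set.Icc c d, |Q.eval y| ≤ B) →
    ∀ t ∈ Set.Icc c d, |(derivative^[k] Q).eval t| ≤ M * B / (d - c)^k := by
  obtain ⟨M, hM, hbound⟩ := aux_unit_bound p
  refine ⟨M, hM, ?_⟩
  intro Q hQ k hk c d hcd B hB t ht
  have hdc : 0 < d - c := sub_pos.2 hcd
  set L : ℝ[X] := Polynomial.C (d - c) * Polynomial.X + Polynomial.C c with hL
  have hRdeg : (Q.comp L).natDegree ≤ p := by
    refine le_trans Polynomial.natDegree_comp_le ?_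
    calc Q.natDegree * L.natDegree ≤ Q.natDegree * 1 :=
          Nat.mul_le_mul_left _ Polynomial.natDegree_linear_le
      _ ≤ p := by rw [mul_one]; exact hQ
  have hLeval : ∀ s : ℝ, L.eval s = (d - c) * s + c := by
    intro s; simp [hL]
  have hRB : ∀ s ∈ Set.Icc (0:ℝ) 1, |(Q.comp L).eval s| ≤ B := by
    intro s hs
    rw [Polynomial.eval_comp, hLeval]
    apply hB
    constructor
    · nlinarith [hs.1, hs.2]
    · nlinarith [hs.1, hs.2]
  set s := (t - c) / (d - c) with hs
  have hs01 : s ∈ Set.Icc (0:ℝ) 1 :=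
    ⟨div_nonneg (by linarith [ht.1]) hdc.le, (div_le_one hdc).2 (by linarith [ht.2])⟩
  have key := hbound (Q.comp L) hRdeg k hk B hRB s hs01
  have hRk : (derivative^[k] (Q.comp L)).eval s = (d - c)^k * (derivative^[k] Q).eval t := by
    rw [aux_iter_deriv_comp, Polynomial.eval_mul, Polynomial.eval_C, Polynomial.eval_comp,
      hLeval]
    congr 2
    have hne : d - c ≠ 0 := hdc.ne'
    have e : (d - c) * ((t - c) / (d - c)) = t - c := by field_simp
    rw [hs]; linarith
  rw [hRk, abs_mul, abs_of_pos (pow_pos hdc k)] at key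
  rw [le_div_iff₀ (pow_pos hdc k)]
  linarith [key]



/-- Two-sided Taylor remainder bound with center `x₀` anywhere in `[a,b]`. -/
lemma aux_taylor_bound {u : ℝ → ℝ} {a b C x₀ x : ℝ} {n : ℕ} (hab : a < b)
    (hu : ContDiffOn ℝ (n + 1 : ℕ) u (Set.Icc a b)) (hx₀ : x₀ ∈ Set.Icc a b)
    (hx : x ∈ Set.Icc a b)
    (hC : ∀ y ∈ Set.Icc a b, |iteratedDerivWithin (n + 1) u (Set.Icc a b) y| ≤ C) :
    |u x - taylorWithinEval u n (Set.Icc a b) x₀ x| ≤ C * |x - x₀| ^ (n + 1) / n ! := by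
  have hf' : DifferentiableOn ℝ (iteratedDerivWithin n u (Set.Icc a b)) (Set.Icc a b) :=
    hu.differentiableOn_iteratedDerivWithin (by exact_mod_cast n.lt_succ_self)
      (uniqueDiffOn_Icc hab)
  have hC0 : 0 ≤ C := le_trans (abs_nonneg _) (hC a (Set.left_mem_Icc.2 hab.le))
  have hfact : (0:ℝ) < n ! := by exact_mod_cast n.factorial_pos
  rcases le_total x₀ x with h | h
  · have hsub : Set.Icc x₀ x ⊆ Set.Icc a b := Set.Icc_subset_Icc hx₀.1 hx.2
    have A : ∀ t ∈ Set.Icc x₀ x,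
        HasDerivWithinAt (fun y => taylorWithinEval u n (Set.Icc a b) y x)
          (((n ! : ℝ)⁻¹ * (x - t) ^ n) • iteratedDerivWithin (n + 1) u (Set.Icc a b) t)
          (Set.Icc x₀ x) t :=
      fun t ht => (hasDerivWithinAt_taylorWithinEval_at_Icc x hab (hsub ht)
        hu.of_succ hf').mono hsub
    have bnd : ∀ t ∈ Set.Ico x₀ x,
        ‖((n ! : ℝ)⁻¹ * (x - t) ^ n) • iteratedDerivWithin (n + 1) u (Set.Icc a b) t‖
          ≤ (n ! : ℝ)⁻¹ * |x - x₀| ^ n * C := by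
      intro t ht
      rw [norm_smul, Real.norm_eq_abs, Real.norm_eq_abs, abs_mul, abs_pow,
        abs_of_nonneg (by positivity : (0:ℝ) ≤ (n ! : ℝ)⁻¹)]
      have h1 : |x - t| ≤ |x - x₀| := by
        rw [abs_of_nonneg (by linarith [ht.2] : (0:ℝ) ≤ x - t),
          abs_of_nonneg (by linarith : (0:ℝ) ≤ x - x₀)]
        linarith [ht.1]
      have h2 : |iteratedDerivWithin (n + 1) u (Set.Icc a b) t| ≤ C :=
        hC t (hsub ⟨ht.1, ht.2.le⟩)
      have h3 : |x - t| ^ n ≤ |x - x₀| ^ n := pow_le_pow_left₀ (abs_nonneg _) h1 n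
      exact mul_le_mul (mul_le_mul_of_nonneg_left h3 (by positivity)) h2 (abs_nonneg _)
        (by positivity)
    have key := norm_image_sub_le_of_norm_deriv_le_segment' A bnd x (Set.right_mem_Icc.2 h)
    simp only [taylorWithinEval_self, Real.norm_eq_abs] at key
    have heq : (n ! : ℝ)⁻¹ * |x - x₀| ^ n * C * (x - x₀)
        = C * |x - x₀| ^ (n + 1) / n ! := by
      rw [abs_of_nonneg (by linarith : (0:ℝ) ≤ x - x₀)]
      field_simp
      ring
    linarith [key, heq.le, heq.ge]
  · have hsub : Set.Icc x x₀ ⊆ Set.Icc a b := Set.Icc_subset_Icc hx.1 hx₀.2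
    have A : ∀ t ∈ Set.Icc x x₀,
        HasDerivWithinAt (fun y => taylorWithinEval u n (Set.Icc a b) y x)
          (((n ! : ℝ)⁻¹ * (x - t) ^ n) • iteratedDerivWithin (n + 1) u (Set.Icc a b) t)
          (Set.Icc x x₀) t :=
      fun t ht => (hasDerivWithinAt_taylorWithinEval_at_Icc x hab (hsub ht)
        hu.of_succ hf').mono hsub
    have bnd : ∀ t ∈ Set.Ico x x₀,
        ‖((n ! : ℝ)⁻¹ * (x - t) ^ n) • iteratedDerivWithin (n + 1) u (Set.Icc a b) t‖
          ≤ (n ! : ℝ)⁻¹ * |x - x₀| ^ n * C := by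
      intro t ht
      rw [norm_smul, Real.norm_eq_abs, Real.norm_eq_abs, abs_mul, abs_pow,
        abs_of_nonneg (by positivity : (0:ℝ) ≤ (n ! : ℝ)⁻¹)]
      have h1 : |x - t| ≤ |x - x₀| := by
        rw [abs_of_nonpos (by linarith [ht.1] : x - t ≤ 0),
          abs_of_nonpos (by linarith : x - x₀ ≤ 0)]
        linarith [ht.2]
      have h2 : |iteratedDerivWithin (n + 1) u (Set.Icc a b) t| ≤ C :=
        hC t (hsub ⟨ht.1, ht.2.le⟩)
      have h3 : |x - t| ^ n ≤ |x - x₀| ^ n := pow_le_pow_left₀ (abs_nonneg _) h1 n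
      exact mul_le_mul (mul_le_mul_of_nonneg_left h3 (by positivity)) h2 (abs_nonneg _)
        (by positivity)
    have key := norm_image_sub_le_of_norm_deriv_le_segment' A bnd x₀ (Set.right_mem_Icc.2 h)
    simp only [taylorWithinEval_self, Real.norm_eq_abs] at key
    rw [abs_sub_comm] at key
    have heq : (n ! : ℝ)⁻¹ * |x - x₀| ^ n * C * (x₀ - x)
        = C * |x - x₀| ^ (n + 1) / n ! := by
      rw [abs_of_nonpos (by linarith : x - x₀ ≤ 0)]
      field_simp
      ring
    linarith [key, heq.le, heq.ge]

/-- The Taylor polynomial as a genuine `Polynomial ℝ`. -/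
noncomputable def taylorPoly (u : ℝ → ℝ) (s : Set ℝ) (x₀ : ℝ) (p : ℕ) : ℝ[X] :=
  ∑ j ∈ Finset.range (p+1),
    Polynomial.C (iteratedDerivWithin j u s x₀ / j !) * (Polynomial.X - Polynomial.C x₀)^j

lemma taylorPoly_natDegree_le (u : ℝ → ℝ) (s : Set ℝ) (x₀ : ℝ) (p : ℕ) :
    (taylorPoly u s x₀ p).natDegree ≤ p := by
  apply Polynomial.natDegree_sum_le_of_forall_le
  intro j hj
  refine le_trans (Polynomial.natDegree_C_mul_le _ _) ?_
  refine le_trans (Polynomial.natDegree_pow_le) ?_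
  rw [Polynomial.natDegree_X_sub_C, mul_one]
  exact Nat.lt_succ_iff.mp (Finset.mem_range.mp hj)

lemma taylorPoly_eval (u : ℝ → ℝ) (s : Set ℝ) (x₀ : ℝ) (p : ℕ) (y : ℝ) :
    (taylorPoly u s x₀ p).eval y = taylorWithinEval u p s x₀ y := by
  rw [taylor_within_apply, taylorPoly, Polynomial.eval_finset_sum]
  refine Finset.sum_congr rfl fun j _ => ?_
  have hfact : (j ! : ℝ) ≠ 0 := by exact_mod_cast j.factorial_ne_zero
  simp only [Polynomial.eval_mul, Polynomial.eval_C, Polynomial.eval_pow, Polynomial.eval_sub,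
    Polynomial.eval_X, smul_eq_mul]
  field_simp

lemma taylorPoly_iterate_deriv_eval (u : ℝ → ℝ) (s : Set ℝ) (x₀ : ℝ) (p k : ℕ) (hk : k ≤ p) :
    (Polynomial.derivative^[k] (taylorPoly u s x₀ p)).eval x₀ = iteratedDerivWithin k u s x₀ := by
  rw [taylorPoly, Polynomial.iterate_derivative_sum, Polynomial.eval_finset_sum]
  rw [Finset.sum_eq_single k]
  · rw [Polynomial.iterate_derivative_C_mul, Polynomial.iterate_derivative_X_sub_pow,
      Nat.sub_self, pow_zero, Nat.descFactorial_self]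
    have hfact : (k ! : ℝ) ≠ 0 := by exact_mod_cast k.factorial_ne_zero
    simp only [nsmul_eq_mul, mul_one, Polynomial.eval_mul, Polynomial.eval_C,
      Polynomial.eval_natCast]
    field_simp
  · intro j hj hjk
    rw [Polynomial.iterate_derivative_C_mul, Polynomial.iterate_derivative_X_sub_pow,
      Polynomial.eval_mul, Polynomial.eval_C]
    rcases lt_or_gt_of_ne hjk with hlt | hgt
    · rw [Nat.descFactorial_eq_zero_iff_lt.mpr hlt]
      simp
    · have hne : j - k ≠ 0 := by omega
      simp only [nsmul_eq_mul, Polynomial.eval_mul, Polynomial.eval_natCast,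
        Polynomial.eval_pow, Polynomial.eval_sub, Polynomial.eval_X, Polynomial.eval_C,
        sub_self]
      rw [zero_pow hne]
      ring
  · intro hk'
    exact absurd (Finset.mem_range.mpr (Nat.lt_succ_of_le hk)) hk'


lemma aux_part_mono {N : ℕ} {x : ℕ → ℝ} (hx : ∀ i ≤ N, x i < x (i+1)) :
    ∀ j l, j ≤ l → l ≤ N + 1 → x j ≤ x l := by
  intro j l hjl hl
  induction l with
  | zero =>
    obtain rfl : j = 0 := by omega
    exact le_refl _
  | succ l ih =>
    rcases Nat.eq_or_lt_of_le hjl with rfl | hlt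
    · exact le_refl _
    · exact le_trans (ih (by omega) (by omega)) (hx l (by omega)).le

/-- Optimal-order `L^∞` convergence forces all derivatives of `u^R` up to order `p`
to remain bounded (Type I `W^{p+1}_∞` numerical smoothness is necessary). -/
theorem optimal_linf_convergence_implies_derivative_bound (p : ℕ) (σ : ℝ) (hσ : 1 ≤ σ) :
    ∃ C : ℝ, 0 < C ∧
      ∀ (N : ℕ), 1 ≤ N → ∀ (a b : ℝ), a < b →
      ∀ (x : ℕ → ℝ), x 0 = a → x (N + 1) = b → (∀ i ≤ N, x i < x (i + 1)) →
      meshH N x ≤ σ * meshHmin N x →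
      ∀ (P : ℕ → Polynomial ℝ), (∀ i ≤ N, (P i).natDegree ≤ p) →
      ∀ (u : ℝ → ℝ), ContDiffOn ℝ (p + 1 : ℕ) u (Set.Icc a b) →
      ∀ (K : ℝ), 0 ≤ K →
      distLinf N x P u ≤ K * meshH N x ^ (p + 1) →
      ∀ i ≤ N, ∀ xm ∈ Set.Icc (x i) (x (i + 1)), ∀ k ≤ p,
      |(Polynomial.derivative^[k] (P i)).eval xm| ≤
        sSup ((fun t => |iteratedDerivWithin k u (Set.Icc a b) t|) '' Set.Icc a b)
          + C * (K + semiWinf p a b u) * meshH N x ^ (p + 1 - k) := by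
  obtain ⟨M, hM, hmarkov⟩ := aux_markov p
  have hσ0 : 0 < σ := by linarith
  refine ⟨M * σ ^ p, by positivity, ?_⟩
  intro N hN a b hab x hx0 hxN hmono hqu P hP u hu K hK hdist i hi xm hxm k hk
  set h := meshH N x with hh
  set D := semiWinf p a b u with hD'
  have hmem : i ∈ Finset.range (N+1) := Finset.mem_range.mpr (by omega)
  have hlen : 0 < x (i+1) - x i := sub_pos.2 (hmono i hi)
  have hlenh : x (i+1) - x i ≤ h := Finset.le_sup' (fun j => x (j+1) - x j) hmem
  have hhpos : 0 < h := lt_of_lt_of_le hlen hlenh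
  have hminlen : meshHmin N x ≤ x (i+1) - x i := Finset.inf'_le (fun j => x (j+1) - x j) hmem
  have hlenσ : h / σ ≤ x (i+1) - x i := by
    rw [div_le_iff₀ hσ0]
    have h1 : σ * meshHmin N x ≤ σ * (x (i+1) - x i) :=
      mul_le_mul_of_nonneg_left hminlen hσ0.le
    linarith [hqu]
  have hIccsub : Set.Icc (x i) (x (i+1)) ⊆ Set.Icc a b := by
    rw [← hx0, ← hxN]
    exact Set.Icc_subset_Icc (aux_part_mono hmono 0 i (by omega) (by omega))
      (aux_part_mono hmono (i+1) (N+1) (by omega) le_rfl)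
  have hxm' : xm ∈ Set.Icc a b := hIccsub hxm
  have hUD : UniqueDiffOn ℝ (Set.Icc a b) := uniqueDiffOn_Icc hab
  -- the seminorm bounds the top derivative
  have hD : ∀ y ∈ Set.Icc a b, |iteratedDerivWithin (p+1) u (Set.Icc a b) y| ≤ D := by
    intro y hy
    apply le_csSup
    · exact IsCompact.bddAbove_image isCompact_Icc
        ((hu.continuousOn_iteratedDerivWithin (by exact_mod_cast le_refl (p+1)) hUD).abs)
    · exact ⟨y, hy, rfl⟩
  have hD0 : 0 ≤ D := le_trans (abs_nonneg _) (hD a ⟨le_rfl, hab.le⟩)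
  -- pointwise bound from the L∞ hypothesis
  have hPbound : ∀ y ∈ Set.Icc (x i) (x (i+1)), |u y - (P i).eval y| ≤ K * h^(p+1) := by
    intro y hy
    have hbdd : BddAbove ((fun t => |u t - (P i).eval t|) '' Set.Icc (x i) (x (i+1))) :=
      IsCompact.bddAbove_image isCompact_Icc
        (((hu.continuousOn.mono hIccsub).sub (P i).continuousOn).abs)
    have h1 : |u y - (P i).eval y| ≤
        sSup ((fun t => |u t - (P i).eval t|) '' Set.Icc (x i) (x (i + 1))) :=
      le_csSup hbdd ⟨y, hy, rfl⟩
    have h2 : sSup ((fun t => |u t - (P i).eval t|) '' Set.Icc (x i) (x (i + 1)))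
        ≤ distLinf N x P u :=
      Finset.le_sup'
        (fun j => sSup ((fun t => |u t - (P j).eval t|) '' Set.Icc (x j) (x (j + 1)))) hmem
    linarith [hdist]
  -- Taylor polynomial at xm
  set T := taylorPoly u (Set.Icc a b) xm p with hT
  have hTbound : ∀ y ∈ Set.Icc (x i) (x (i+1)), |u y - T.eval y| ≤ D * h^(p+1) := by
    intro y hy
    rw [hT, taylorPoly_eval]
    have hb := aux_taylor_bound (n := p) hab hu hxm' (hIccsub hy) hD
    refine le_trans hb ?_
    have h1 : |y - xm| ≤ h := by
      rw [abs_le]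
      constructor
      · linarith [hy.1, hxm.2]
      · linarith [hy.2, hxm.1]
    have h2 : |y - xm|^(p+1) ≤ h^(p+1) := pow_le_pow_left₀ (abs_nonneg _) h1 _
    have hfact1 : (1:ℝ) ≤ p ! := by exact_mod_cast p.factorial_pos
    calc D * |y - xm| ^ (p+1) / p ! ≤ D * |y - xm| ^ (p+1) / 1 := by
          apply div_le_div_of_nonneg_left (by positivity) one_pos hfact1
      _ = D * |y - xm| ^ (p+1) := by rw [div_one]
      _ ≤ D * h^(p+1) := mul_le_mul_of_nonneg_left h2 hD0
  -- the difference polynomial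
  set Q := P i - T with hQ
  have hQdeg : Q.natDegree ≤ p :=
    le_trans (Polynomial.natDegree_sub_le _ _)
      (max_le (hP i hi) (taylorPoly_natDegree_le u (Set.Icc a b) xm p))
  have hQb : ∀ y ∈ Set.Icc (x i) (x (i+1)), |Q.eval y| ≤ (K + D) * h^(p+1) := by
    intro y hy
    rw [hQ, Polynomial.eval_sub]
    have h1 := hPbound y hy
    have h2 := hTbound y hy
    have h3 : (P i).eval y - T.eval y = (u y - T.eval y) + ((P i).eval y - u y) := by ring
    rw [h3]
    calc |(u y - T.eval y) + ((P i).eval y - u y)|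
        ≤ |u y - T.eval y| + |(P i).eval y - u y| := abs_add_le _ _
      _ = |u y - T.eval y| + |u y - (P i).eval y| := by rw [abs_sub_comm ((P i).eval y) (u y)]
      _ ≤ D * h^(p+1) + K * h^(p+1) := by linarith
      _ = (K + D) * h^(p+1) := by ring
  have hmar := hmarkov Q hQdeg k hk (x i) (x (i+1)) (hmono i hi) ((K + D) * h^(p+1)) hQb xm hxm
  -- massage the Markov bound
  have hfin : M * ((K + D) * h^(p+1)) / (x (i+1) - x i)^k ≤ M * σ^p * (K + D) * h^(p+1-k) := by
    have hden : (h/σ)^k ≤ (x (i+1) - x i)^k := pow_le_pow_left₀ (by positivity) hlenσ k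
    have hdenpos : (0:ℝ) < (h/σ)^k := by positivity
    have step1 : M * ((K + D) * h^(p+1)) / (x (i+1) - x i)^k
        ≤ M * ((K + D) * h^(p+1)) / (h/σ)^k :=
      div_le_div_of_nonneg_left (by positivity) hdenpos hden
    have step2 : M * ((K + D) * h^(p+1)) / (h/σ)^k = M * σ^k * (K + D) * h^(p+1-k) := by
      rw [div_pow]
      have hsplit : h^(p+1) = h^(p+1-k) * h^k := by
        rw [← pow_add]
        congr 1
        omega
      rw [hsplit]
      field_simp
    have step3 : M * σ^k * (K + D) * h^(p+1-k) ≤ M * σ^p * (K + D) * h^(p+1-k) := by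
      have hσk : σ^k ≤ σ^p := pow_le_pow_right₀ hσ hk
      have hKD : (0:ℝ) ≤ K + D := by linarith
      have hhk : (0:ℝ) ≤ h^(p+1-k) := by positivity
      have hms : M * σ^k ≤ M * σ^p := mul_le_mul_of_nonneg_left hσk hM.le
      exact mul_le_mul_of_nonneg_right (mul_le_mul_of_nonneg_right hms hKD) hhk
    linarith
  -- the k-th derivative of u is bounded by the sup
  have hkbdd : |iteratedDerivWithin k u (Set.Icc a b) xm| ≤
      sSup ((fun t => |iteratedDerivWithin k u (Set.Icc a b) t|) '' Set.Icc a b) := by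
    apply le_csSup
    · exact IsCompact.bddAbove_image isCompact_Icc
        ((hu.continuousOn_iteratedDerivWithin
          (by exact_mod_cast (by omega : k ≤ p + 1)) hUD).abs)
    · exact ⟨xm, hxm', rfl⟩
  -- put everything together
  have hPQ : P i = Q + T := by rw [hQ]; ring
  have hsubQ : (Polynomial.derivative^[k] Q).eval xm
      = (Polynomial.derivative^[k] (P i)).eval xm - (Polynomial.derivative^[k] T).eval xm := by
    rw [hQ, Polynomial.iterate_derivative_sub, Polynomial.eval_sub]
  have heval : (Polynomial.derivative^[k] (P i)).eval xm
      = (Polynomial.derivative^[k] Q).eval xm + iteratedDerivWithin k u (Set.Icc a b) xm := by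
    have h4 := taylorPoly_iterate_deriv_eval u (Set.Icc a b) xm p k hk
    rw [← hT] at h4
    linarith [hsubQ, h4]
  rw [heval]
  calc |(Polynomial.derivative^[k] Q).eval xm + iteratedDerivWithin k u (Set.Icc a b) xm|
      ≤ |iteratedDerivWithin k u (Set.Icc a b) xm| + |(Polynomial.derivative^[k] Q).eval xm| := by
        rw [add_comm ((Polynomial.derivative^[k] Q).eval xm)]
        exact abs_add_le _ _
    _ ≤ sSup ((fun t => |iteratedDerivWithin k u (Set.Icc a b) t|) '' Set.Icc a b)
        + M * σ^p * (K + D) * h^(p+1-k) := by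
        have := le_trans hmar hfin
        linarith

end
end

section
/- For all integers n ≥ 1 and p ≥ 0 there exists a constant C > 0 depending only on n and p such that for every real polynomial v in n variables of total degree at most p, every center x₀ ∈ ℝⁿ, and every radius δ > 0, one has ∫_{B(x₀,δ)} |v(x)| dx ≥ C δ^{n/2} ( ∫_{B(x₀,δ)} v(x)² dx )^{1/2}, where B(x₀,δ) is the open Euclidean ball of center x₀ and radius δ and integrals are with respect to Lebesgue measure. (This is the inverse L¹–L² estimate for polynomials of bounded degree, obtained by norm equivalence on a finite-dimensional space and scaling.) -/
open MeasureTheory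

namespace InvL1L2Aux

open Metric MvPolynomial Set

variable {n : ℕ}

noncomputable def ev (v : MvPolynomial (Fin n) ℝ) (x : EuclideanSpace ℝ (Fin n)) : ℝ :=
  MvPolynomial.eval (fun i => x i) v

lemma continuous_coords : Continuous fun (x : EuclideanSpace ℝ (Fin n)) (i : Fin n) => x i :=
  continuous_pi fun i => (EuclideanSpace.proj i : EuclideanSpace ℝ (Fin n) →L[ℝ] ℝ).continuous

lemma continuous_ev (v : MvPolynomial (Fin n) ℝ) : Continuous (ev v) :=
  (MvPolynomial.continuous_eval v).comp continuous_coords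

lemma ev_add (v w : MvPolynomial (Fin n) ℝ) : ev (v + w) = ev v + ev w := by
  funext x; simp [ev]

lemma ev_smul (c : ℝ) (v : MvPolynomial (Fin n) ℝ) : ev (c • v) = c • ev v := by
  funext x; simp [ev, MvPolynomial.smul_eval]

lemma integrableOn_ev (v : MvPolynomial (Fin n) ℝ) (x₀ : EuclideanSpace ℝ (Fin n)) (δ : ℝ) :
    IntegrableOn (ev v) (ball x₀ δ) :=
  ((continuous_ev v).locallyIntegrable.integrableOn_isCompact
    (isCompact_closedBall x₀ δ)).mono_set ball_subset_closedBall

lemma memℒp_ev (v : MvPolynomial (Fin n) ℝ) (x₀ : EuclideanSpace ℝ (Fin n)) (δ : ℝ) :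
    MemLp (ev v) 2 (volume.restrict (ball x₀ δ)) := by
  have : IsFiniteMeasure (volume.restrict (ball x₀ δ)) :=
    ⟨by rw [Measure.restrict_apply_univ]; exact measure_ball_lt_top⟩
  obtain ⟨M, hM⟩ : ∃ M, ∀ x ∈ closedBall x₀ δ, ‖ev v x‖ ≤ M :=
    (isCompact_closedBall x₀ δ).exists_bound_of_continuousOn ((continuous_ev v).continuousOn)
  refine MemLp.of_bound ((continuous_ev v).aestronglyMeasurable.restrict) M ?_
  filter_upwards [ae_restrict_mem measurableSet_ball] with x hx
  exact hM x (ball_subset_closedBall hx)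

lemma eq_zero_of_ev_ball (v : MvPolynomial (Fin n) ℝ) (c : EuclideanSpace ℝ (Fin n)) {ε : ℝ}
    (hε : 0 < ε) (h : ∀ x ∈ ball c ε, ev v x = 0) : v = 0 := by
  have key : ∀ y : Fin n → ℝ, MvPolynomial.eval y v = 0 := by
    intro y
    set yE : EuclideanSpace ℝ (Fin n) := (WithLp.equiv 2 _).symm y with hyE
    set q : Polynomial ℝ :=
      MvPolynomial.aeval (fun i => Polynomial.C (c i) + Polynomial.C (y i - c i) * Polynomial.X) v
      with hq
    have hline : ∀ t : ℝ, Polynomial.eval t q = ev v (c + t • (yE - c)) := by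
      intro t
      have := MvPolynomial.comp_aeval_apply
        (f := fun i : Fin n => Polynomial.C (c i) + Polynomial.C (y i - c i) * Polynomial.X)
        (Polynomial.aeval t : Polynomial ℝ →ₐ[ℝ] ℝ) v
      have h2 : (Polynomial.aeval t : Polynomial ℝ →ₐ[ℝ] ℝ) q
          = MvPolynomial.aeval (fun i => c i + (y i - c i) * t) v := by
        rw [hq, this]; simp
      have h3 : (Polynomial.aeval t : Polynomial ℝ →ₐ[ℝ] ℝ) q = Polynomial.eval t q := by
        rw [Polynomial.coe_aeval_eq_eval]
      rw [← h3, h2, ev]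
      have h4 : (fun i => ((c + t • (yE - c)) : EuclideanSpace ℝ (Fin n)) i)
          = fun i => c i + (y i - c i) * t := by
        funext i
        simp [yE, PiLp.add_apply, PiLp.smul_apply, PiLp.sub_apply, smul_eq_mul,
          WithLp.equiv_symm_apply, PiLp.toLp_apply]
        ring
      rw [h4]
      exact DFunLike.congr_fun (MvPolynomial.coe_aeval_eq_eval _) v
    have hq0 : q = 0 := by
      apply Polynomial.eq_zero_of_infinite_isRoot
      set T : ℝ := ε / (‖yE - c‖ + 1) with hT
      have hTpos : 0 < T := div_pos hε (by positivity)
      refine ((Set.Ioo_infinite hTpos)).mono ?_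
      intro t ht
      have ht0 : 0 < t := ht.1
      have htT : t < T := ht.2
      have hmem : c + t • (yE - c) ∈ ball c ε := by
        rw [mem_ball, dist_eq_norm]
        have : c + t • (yE - c) - c = t • (yE - c) := by abel
        rw [this, norm_smul, Real.norm_eq_abs, abs_of_pos ht0]
        calc t * ‖yE - c‖ ≤ t * (‖yE - c‖ + 1) := by nlinarith [norm_nonneg (yE - c)]
          _ < T * (‖yE - c‖ + 1) := by nlinarith [norm_nonneg (yE - c)]
          _ = ε := by rw [hT, div_mul_cancel₀ _ (by positivity)]
      show Polynomial.IsRoot q t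
      rw [Polynomial.IsRoot, hline t, h _ hmem]
    have h1 := hline 1
    rw [hq0] at h1
    simp only [Polynomial.eval_zero] at h1
    rw [one_smul, add_sub_cancel] at h1
    have h6 : ev v yE = MvPolynomial.eval y v := rfl
    rw [h6] at h1
    exact h1.symm
  have : ∀ y : Fin n → ℝ, MvPolynomial.eval y v = MvPolynomial.eval y 0 := by simp [key]
  exact MvPolynomial.funext this

lemma totalDegree_bind₁_le (f : Fin n → MvPolynomial (Fin n) ℝ)
    (hf : ∀ i, (f i).totalDegree ≤ 1) (v : MvPolynomial (Fin n) ℝ) :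
    (bind₁ f v).totalDegree ≤ v.totalDegree := by
  conv_lhs => rw [v.as_sum, map_sum]
  refine totalDegree_finsetSum_le fun m hm => ?_
  rw [bind₁_monomial]
  refine (totalDegree_mul _ _).trans ?_
  rw [totalDegree_C, zero_add]
  refine (totalDegree_finset_prod _ _).trans ?_
  calc ∑ i ∈ m.support, (f i ^ m i).totalDegree
      ≤ ∑ i ∈ m.support, m i * (f i).totalDegree :=
        Finset.sum_le_sum fun i _ => totalDegree_pow _ _
    _ ≤ ∑ i ∈ m.support, m i * 1 :=
        Finset.sum_le_sum fun i _ => Nat.mul_le_mul_left _ (hf i)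
    _ = m.sum fun _ e => e := by simp [Finsupp.sum]
    _ ≤ v.totalDegree := le_totalDegree hm

lemma eval_bind₁' (g : Fin n → ℝ) (f : Fin n → MvPolynomial (Fin n) ℝ)
    (v : MvPolynomial (Fin n) ℝ) :
    MvPolynomial.eval g (bind₁ f v) = MvPolynomial.eval (fun i => MvPolynomial.eval g (f i)) v :=
  eval₂Hom_bind₁ (RingHom.id ℝ) g f v

lemma deg_one_sub (x₀ : EuclideanSpace ℝ (Fin n)) (δ : ℝ) (i : Fin n) :
    (MvPolynomial.C (x₀ i) + MvPolynomial.C δ * MvPolynomial.X i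
      : MvPolynomial (Fin n) ℝ).totalDegree ≤ 1 := by
  refine (totalDegree_add _ _).trans (max_le (by simp) ?_)
  refine (totalDegree_mul _ _).trans ?_
  simp [totalDegree_X]

noncomputable abbrev μu (n : ℕ) : Measure (EuclideanSpace ℝ (Fin n)) :=
  volume.restrict (ball (0 : EuclideanSpace ℝ (Fin n)) 1)

noncomputable def T1 (p : ℕ) :
    (restrictTotalDegree (Fin n) ℝ p) →ₗ[ℝ] (Lp ℝ 1 (μu n)) where
  toFun v := ((integrableOn_ev (v : MvPolynomial (Fin n) ℝ) 0 1).toL1 _)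
  map_add' v w := by
    simp only [Submodule.coe_add]
    rw [← Integrable.toL1_add _ _ (integrableOn_ev _ 0 1) (integrableOn_ev _ 0 1)]
    congr 1
    exact ev_add _ _
  map_smul' c v := by
    simp only [Submodule.coe_smul, RingHom.id_apply]
    rw [← Integrable.toL1_smul _ (integrableOn_ev _ 0 1)]
    congr 1
    exact ev_smul _ _

noncomputable def T2 (p : ℕ) :
    (restrictTotalDegree (Fin n) ℝ p) →ₗ[ℝ] (Lp ℝ 2 (μu n)) where
  toFun v := (memℒp_ev (v : MvPolynomial (Fin n) ℝ) 0 1).toLp _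
  map_add' v w := by
    simp only [Submodule.coe_add]
    rw [← MemLp.toLp_add (memℒp_ev _ 0 1) (memℒp_ev _ 0 1)]
    congr 1
    exact ev_add _ _
  map_smul' c v := by
    simp only [Submodule.coe_smul, RingHom.id_apply]
    rw [← MemLp.toLp_const_smul c (memℒp_ev _ 0 1)]
    congr 1
    exact ev_smul _ _

lemma zero_on_ball_of_ae {f : EuclideanSpace ℝ (Fin n) → ℝ} (hf : Continuous f)
    {c : EuclideanSpace ℝ (Fin n)} {ε : ℝ}
    (h : f =ᵐ[volume.restrict (ball c ε)] 0) : ∀ x ∈ ball c ε, f x = 0 := by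
  have h' : volume ({x | ¬ f x = 0} ∩ ball c ε) = 0 := by
    rw [Filter.EventuallyEq, ae_restrict_iff' measurableSet_ball] at h
    rw [ae_iff] at h
    convert h using 2
    ext x
    simp only [mem_inter_iff, mem_setOf_eq, Pi.zero_apply]
    tauto
  have hopen : IsOpen ({x | ¬ f x = 0} ∩ ball c ε) :=
    (isOpen_compl_iff.mpr (isClosed_eq hf continuous_const)).inter isOpen_ball
  have := hopen.eq_empty_of_measure_zero h'
  intro x hx
  by_contra hne
  exact absurd this (Set.nonempty_iff_ne_empty.mp ⟨x, ⟨hne, hx⟩⟩)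

set_option maxHeartbeats 1000000 in
set_option synthInstance.maxHeartbeats 400000 in
lemma unit_estimate (n p : ℕ) :
    ∃ C : ℝ, 0 < C ∧ ∀ v : MvPolynomial (Fin n) ℝ, v.totalDegree ≤ p →
      Real.sqrt (∫ x in ball (0 : EuclideanSpace ℝ (Fin n)) 1, (ev v x) ^ 2) ≤
        C * ∫ x in ball (0 : EuclideanSpace ℝ (Fin n)) 1, |ev v x| := by
  classical
  set W := restrictTotalDegree (Fin n) ℝ p
  haveI : Module.Free ℝ W := Module.Free.of_divisionRing ℝ W
  haveI : FiniteDimensional ℝ W := inferInstance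
  set d := Module.finrank ℝ W with hd
  set b : Module.Basis (Fin d) ℝ W := Module.finBasis ℝ W
  set φ : EuclideanSpace ℝ (Fin d) ≃ₗ[ℝ] W :=
    (WithLp.linearEquiv 2 ℝ (Fin d → ℝ)).trans b.equivFun.symm with hφ
  set A₁ : EuclideanSpace ℝ (Fin d) →ₗ[ℝ] Lp ℝ 1 (μu n) :=
    (T1 (n := n) p).comp φ.toLinearMap with hA₁
  set A₂ : EuclideanSpace ℝ (Fin d) →ₗ[ℝ] Lp ℝ 2 (μu n) :=
    (T2 (n := n) p).comp φ.toLinearMap with hA₂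
  have hT1inj : ∀ w : W, T1 (n := n) p w = 0 → w = 0 := by
    intro w hw
    have h0 : ev (w : MvPolynomial (Fin n) ℝ) =ᵐ[μu n] 0 := by
      refine (Integrable.toL1_eq_toL1_iff _ _ (integrableOn_ev (w : MvPolynomial (Fin n) ℝ) 0 1)
        (integrable_zero _ _ _)).mp ?_
      exact hw.trans (Integrable.toL1_zero _).symm
    have hz := zero_on_ball_of_ae (continuous_ev _) h0
    have := eq_zero_of_ev_ball (w : MvPolynomial (Fin n) ℝ) 0 one_pos hz
    exact Subtype.ext this
  have hA₁inj : Function.Injective A₁ := by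
    intro a a' h
    have : T1 (n := n) p (φ a - φ a') = 0 := by
      rw [map_sub]
      simp only [hA₁, LinearMap.comp_apply] at h
      rw [sub_eq_zero]
      exact h
    have := hT1inj _ this
    have : φ a = φ a' := by rwa [sub_eq_zero] at this
    exact φ.injective this
  set e : EuclideanSpace ℝ (Fin d) ≃ₗ[ℝ] LinearMap.range A₁ := LinearEquiv.ofInjective A₁ hA₁inj
  set eC := e.toContinuousLinearEquiv
  set K := ‖(eC.symm : LinearMap.range A₁ →L[ℝ] EuclideanSpace ℝ (Fin d))‖ with hK
  have hlow : ∀ c : EuclideanSpace ℝ (Fin d), ‖c‖ ≤ K * ‖A₁ c‖ := by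
    intro c
    have h1 : ‖c‖ = ‖eC.symm (eC c)‖ := by rw [ContinuousLinearEquiv.symm_apply_apply]
    have h2 : ‖eC.symm (eC c)‖ ≤ K * ‖eC c‖ :=
      (eC.symm : LinearMap.range A₁ →L[ℝ] EuclideanSpace ℝ (Fin d)).le_opNorm _
    have h3 : ‖eC c‖ = ‖A₁ c‖ := by
      have : ((eC c : LinearMap.range A₁) : Lp ℝ 1 (μu n)) = A₁ c := rfl
      rw [← this]; rfl
    rw [h1, ← h3]; exact h2
  set A₂c := LinearMap.toContinuousLinearMap A₂ with hA₂c
  set M := ‖A₂c‖ with hM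
  refine ⟨M * K + 1, by positivity, ?_⟩
  intro v hv
  set w : W := ⟨v, (mem_restrictTotalDegree _ _ _).mpr hv⟩ with hw
  set c := φ.symm w with hc
  have hφc : (φ c : MvPolynomial (Fin n) ℝ) = v := by rw [hc, φ.apply_symm_apply]
  have hn1 : ‖A₁ c‖ = ∫ x in ball (0 : EuclideanSpace ℝ (Fin n)) 1, |ev v x| := by
    have : A₁ c = (integrableOn_ev v 0 1).toL1 _ := by
      simp only [hA₁, LinearMap.comp_apply]
      show T1 (n := n) p (φ c) = _
      rw [hc, φ.apply_symm_apply]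
      rfl
    rw [this]; refine (L1.norm_of_fun_eq_integral_norm _).trans ?_
    congr 1
  have hn2 : ‖A₂ c‖ = Real.sqrt (∫ x in ball (0 : EuclideanSpace ℝ (Fin n)) 1, (ev v x) ^ 2) := by
    have hA : A₂ c = (memℒp_ev v 0 1).toLp _ := by
      simp only [hA₂, LinearMap.comp_apply]
      show T2 (n := n) p (φ c) = _
      rw [hc, φ.apply_symm_apply]
      rfl
    have hsq : ‖A₂ c‖ ^ 2 = ∫ x in ball (0 : EuclideanSpace ℝ (Fin n)) 1, (ev v x) ^ 2 := by
      rw [← real_inner_self_eq_norm_sq, MeasureTheory.L2.inner_def, hA]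
      have hcoe := MemLp.coeFn_toLp (memℒp_ev v (0 : EuclideanSpace ℝ (Fin n)) 1)
      refine integral_congr_ae ?_
      filter_upwards [hcoe] with a ha
      rw [ha]
      simp only [RCLike.inner_apply, conj_trivial]
      ring
    rw [← hsq, Real.sqrt_sq (norm_nonneg _)]
  have hup : ‖A₂ c‖ ≤ M * ‖c‖ := by
    have := A₂c.le_opNorm c
    exact this
  calc Real.sqrt (∫ x in ball (0 : EuclideanSpace ℝ (Fin n)) 1, (ev v x) ^ 2)
      = ‖A₂ c‖ := hn2.symm
    _ ≤ M * ‖c‖ := hup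
    _ ≤ M * (K * ‖A₁ c‖) := mul_le_mul_of_nonneg_left (hlow c) (norm_nonneg _)
    _ = M * K * ‖A₁ c‖ := by ring
    _ ≤ (M * K + 1) * ‖A₁ c‖ := by
        have : (0:ℝ) ≤ ‖A₁ c‖ := norm_nonneg _
        nlinarith
    _ = (M * K + 1) * ∫ x in ball (0 : EuclideanSpace ℝ (Fin n)) 1, |ev v x| := by rw [hn1]

lemma scaling (F : EuclideanSpace ℝ (Fin n) → ℝ) (x₀ : EuclideanSpace ℝ (Fin n)) {δ : ℝ}
    (hδ : 0 < δ) :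
    ∫ x in ball x₀ δ, F x
      = δ ^ n * ∫ y in ball (0 : EuclideanSpace ℝ (Fin n)) 1, F (x₀ + δ • y) := by
  classical
  have key : ∫ y in ball (0 : EuclideanSpace ℝ (Fin n)) 1, F (x₀ + δ • y)
      = (δ ^ n)⁻¹ * ∫ x in ball x₀ δ, F x := by
    set G : EuclideanSpace ℝ (Fin n) → ℝ := fun z => (ball x₀ δ).indicator F (x₀ + z) with hG
    calc ∫ y in ball (0 : EuclideanSpace ℝ (Fin n)) 1, F (x₀ + δ • y)
        = ∫ y, (ball (0 : EuclideanSpace ℝ (Fin n)) 1).indicator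
            (fun y => F (x₀ + δ • y)) y := by
          rw [integral_indicator measurableSet_ball]
      _ = ∫ y, G (δ • y) := by
          refine integral_congr_ae (Filter.Eventually.of_forall fun y => ?_)
          rw [hG]
          simp only [indicator_apply]
          have hmem : x₀ + δ • y ∈ ball x₀ δ ↔ y ∈ ball (0 : EuclideanSpace ℝ (Fin n)) 1 := by
            rw [mem_ball, dist_eq_norm, add_sub_cancel_left, norm_smul, Real.norm_eq_abs,
              abs_of_pos hδ, mem_ball_zero_iff]
            constructor
            · intro h; nlinarith [norm_nonneg y]
            · intro h; nlinarith [norm_nonneg y]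
          by_cases hy : y ∈ ball (0 : EuclideanSpace ℝ (Fin n)) 1
          · rw [if_pos hy, if_pos (hmem.mpr hy)]
          · rw [if_neg hy, if_neg (fun hh => hy (hmem.mp hh))]
      _ = (δ ^ Module.finrank ℝ (EuclideanSpace ℝ (Fin n)))⁻¹ • ∫ z, G z :=
          Measure.integral_comp_smul_of_nonneg volume G δ (hR := hδ.le)
      _ = (δ ^ n)⁻¹ * ∫ z, (ball x₀ δ).indicator F (x₀ + z) := by
          rw [finrank_euclideanSpace_fin, smul_eq_mul]
      _ = (δ ^ n)⁻¹ * ∫ x, (ball x₀ δ).indicator F x := by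
          rw [integral_add_left_eq_self x₀ (f := (ball x₀ δ).indicator F)]
      _ = (δ ^ n)⁻¹ * ∫ x in ball x₀ δ, F x := by
          rw [integral_indicator measurableSet_ball]
  rw [key]
  field_simp

end InvL1L2Aux

open InvL1L2Aux Metric in
/-- Inverse `L¹`–`L²` estimate for polynomials of total degree at most `p` on Euclidean
balls: `∫_B |v| ≥ C δ^{n/2} (∫_B v²)^{1/2}` with `C` depending only on `n` and `p`. -/
theorem inverse_l1_l2_estimate_polynomials (n p : ℕ) (hn : 1 ≤ n) :
    ∃ C : ℝ, 0 < C ∧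
      ∀ (v : MvPolynomial (Fin n) ℝ), v.totalDegree ≤ p →
      ∀ (x₀ : EuclideanSpace ℝ (Fin n)) (δ : ℝ), 0 < δ →
      (∫ x in Metric.ball x₀ δ, |MvPolynomial.eval (fun i => x i) v|) ≥
        C * δ ^ ((n : ℝ) / 2) *
          Real.sqrt (∫ x in Metric.ball x₀ δ, (MvPolynomial.eval (fun i => x i) v) ^ 2) := by
  obtain ⟨C₀, hC₀, hest⟩ := unit_estimate n p
  refine ⟨C₀⁻¹, inv_pos.mpr hC₀, ?_⟩
  intro v hv x₀ δ hδ
  set f : Fin n → MvPolynomial (Fin n) ℝ :=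
    fun i => MvPolynomial.C (x₀ i) + MvPolynomial.C δ * MvPolynomial.X i with hf
  set w : MvPolynomial (Fin n) ℝ := MvPolynomial.bind₁ f v with hwdef
  have hdegw : w.totalDegree ≤ p :=
    (totalDegree_bind₁_le f (deg_one_sub x₀ δ) v).trans hv
  have hev : ∀ y : EuclideanSpace ℝ (Fin n), ev w y = ev v (x₀ + δ • y) := by
    intro y
    rw [hwdef, ev, eval_bind₁', ev]
    have hg : (fun i => MvPolynomial.eval (fun j => y j) (f i))
        = fun i => ((x₀ + δ • y) : EuclideanSpace ℝ (Fin n)) i := by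
      funext i
      simp [hf, PiLp.add_apply, PiLp.smul_apply, smul_eq_mul]
    rw [hg]
  have h1 : (∫ x in Metric.ball x₀ δ, |ev v x|)
      = δ ^ n * ∫ y in Metric.ball (0 : EuclideanSpace ℝ (Fin n)) 1, |ev w y| := by
    rw [scaling (fun x => |ev v x|) x₀ hδ]
    congr 1
    refine integral_congr_ae (Filter.Eventually.of_forall fun y => ?_)
    simp only [hev]
  have h2 : (∫ x in Metric.ball x₀ δ, (ev v x) ^ 2)
      = δ ^ n * ∫ y in Metric.ball (0 : EuclideanSpace ℝ (Fin n)) 1, (ev w y) ^ 2 := by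
    rw [scaling (fun x => (ev v x) ^ 2) x₀ hδ]
    congr 1
    refine integral_congr_ae (Filter.Eventually.of_forall fun y => ?_)
    simp only [hev]
  have hI2_nonneg : 0 ≤ ∫ y in Metric.ball (0 : EuclideanSpace ℝ (Fin n)) 1, (ev w y) ^ 2 :=
    integral_nonneg fun y => sq_nonneg _
  have hI1_nonneg : 0 ≤ ∫ y in Metric.ball (0 : EuclideanSpace ℝ (Fin n)) 1, |ev w y| :=
    integral_nonneg fun y => abs_nonneg _
  have hhalf : Real.sqrt (δ ^ n) = δ ^ ((n : ℝ) / 2) := by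
    rw [Real.sqrt_eq_rpow, ← Real.rpow_natCast δ n, ← Real.rpow_mul hδ.le, mul_one_div]
  have hpow : δ ^ ((n : ℝ) / 2) * δ ^ ((n : ℝ) / 2) = δ ^ n := by
    rw [← Real.rpow_add hδ, ← Real.rpow_natCast δ n]
    congr 1
    ring
  have hrpow_nonneg : 0 ≤ δ ^ ((n : ℝ) / 2) := Real.rpow_nonneg hδ.le _
  show (∫ x in Metric.ball x₀ δ, |ev v x|) ≥ C₀⁻¹ * δ ^ ((n : ℝ) / 2) *
      Real.sqrt (∫ x in Metric.ball x₀ δ, (ev v x) ^ 2)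
  rw [h1, h2, Real.sqrt_mul (pow_nonneg hδ.le n), hhalf]
  have hkey := hest w hdegw
  calc C₀⁻¹ * δ ^ ((n : ℝ) / 2) *
        (δ ^ ((n : ℝ) / 2) * Real.sqrt (∫ y in Metric.ball (0 : EuclideanSpace ℝ (Fin n)) 1,
          (ev w y) ^ 2))
      = C₀⁻¹ * (δ ^ ((n : ℝ) / 2) * δ ^ ((n : ℝ) / 2)) *
          Real.sqrt (∫ y in Metric.ball (0 : EuclideanSpace ℝ (Fin n)) 1, (ev w y) ^ 2) := by
        ring
    _ = C₀⁻¹ * δ ^ n *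
          Real.sqrt (∫ y in Metric.ball (0 : EuclideanSpace ℝ (Fin n)) 1, (ev w y) ^ 2) := by
        rw [hpow]
    _ ≤ C₀⁻¹ * δ ^ n *
          (C₀ * ∫ y in Metric.ball (0 : EuclideanSpace ℝ (Fin n)) 1, |ev w y|) := by
        refine mul_le_mul_of_nonneg_left hkey ?_
        positivity
    _ = δ ^ n * ∫ y in Metric.ball (0 : EuclideanSpace ℝ (Fin n)) 1, |ev w y| := by
        field_simp
end
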